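/- If a Boolean assignment together with a substitution σ satisfies the subsumption encoding 𝓔_S(S,M) (positive compatibility, SAT-based partial completeness, and SAT-based multiplicity conservation) and M has no duplicate atoms, then for all i, j: b⁺ᵢⱼ is true if and only if σ(sᵢ) = mⱼ. -/

import Mathlib

/-- First-order terms over variables `V`. -/
inductive Trm (V : Type) : Type
  | var : V → Trm V
  | fn : ℕ → Trm V
  | app : Trm V → Trm V → Trm V
deriving DecidableEq

/-- Applying a (total) substitution to a term. -/
def Trm.subst {V : Type} (σ : V → Trm V) : Trm V → Trm V
  | .var x => σ x
  | .fn f => .fn f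
  | .app t u => .app (t.subst σ) (u.subst σ)

/-- A first-order literal: a polarity, a predicate symbol and an argument term. -/
structure Lit (V : Type) where
  pos : Bool
  pred : ℕ
  arg : Trm V
deriving DecidableEq

/-- The complement of a literal. -/
def Lit.neg {V : Type} (l : Lit V) : Lit V := { l with pos := !l.pos }

/-- Applying a substitution to a literal. -/
def Lit.subst {V : Type} (σ : V → Trm V) (l : Lit V) : Lit V :=
  { l with arg := l.arg.subst σ }

/-- A clause is a multiset of literals. -/
abbrev Clause (V : Type) := Multiset (Lit V)

/-- Applying a substitution to a clause. -/
def Clause.subst {V : Type} (σ : V → Trm V) (C : Clause V) : Clause V :=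
  C.map (Lit.subst σ)

/-- `S` subsumes `M`: some substitution maps `S` to a sub-multiset of `M`. -/
def Subsumes {V : Type} (S M : Clause V) : Prop :=
  ∃ σ : V → Trm V, Clause.subst σ S ≤ M

/-- `S` and `M` are side and main premises of subsumption resolution:
there are `σ`, a nonempty `S' ⊆ S` and `m' ∈ M` with `σ(S') = {¬m'}` and
`σ(S \ S') ⊆ M \ {m'}`. -/
def SubRes {V : Type} [DecidableEq V] (S M : Clause V) : Prop :=
  ∃ (σ : V → Trm V) (S' : Clause V) (m' : Lit V),
    S' ≤ S ∧ S' ≠ 0 ∧ m' ∈ M ∧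
    (∀ l ∈ S', Lit.subst σ l = m'.neg) ∧
    (∀ l ∈ S - S', Lit.subst σ l ∈ M.erase m')

/-- Partial substitutions. -/
abbrev PSub (V : Type) := V → Option (Trm V)

/-- Partial application of a partial substitution to a term. -/
def Trm.psubst {V : Type} (θ : PSub V) : Trm V → Option (Trm V)
  | .var x => θ x
  | .fn f => some (.fn f)
  | .app t u => (t.psubst θ).bind fun t' => (u.psubst θ).map fun u' => .app t' u'

/-- Partial application of a partial substitution to a literal. -/
def Lit.psubst {V : Type} (θ : PSub V) (l : Lit V) : Option (Lit V) :=
  (l.arg.psubst θ).map fun t => { l with arg := t }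

/-- `θ ⊆ σ`: the total substitution `σ` extends the partial substitution `θ`. -/
def PSub.le {V : Type} (θ : PSub V) (σ : V → Trm V) : Prop :=
  ∀ x t, θ x = some t → σ x = t

/-- The clause with literals `s 0, …, s (k-1)`. -/
def clauseOfFn {V : Type} {k : ℕ} (s : Fin k → Lit V) : Clause V :=
  (List.ofFn s : List (Lit V))

/-- The indexed clause `m` has no duplicate literals. -/
def NoDupIdx {V : Type} {n : ℕ} (m : Fin n → Lit V) : Prop :=
  ∀ j j' : Fin n, m j = m j' → j = j'

/-- The indexed clause `m` has no duplicate atoms: no two (distinct) literals are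
equal or complementary. -/
def NoDupAtomsIdx {V : Type} {n : ℕ} (m : Fin n → Lit V) : Prop :=
  (∀ j j' : Fin n, m j = m j' → j = j') ∧ (∀ j j' : Fin n, m j ≠ (m j').neg)

/-- `Sp` is the family of positive matchers `Σ⁺ᵢⱼ`: `Sp i j = some θ` exactly when a
substitution matching `sᵢ` to `mⱼ` exists, in which case `θ` is such a (partial)
matcher and every total match is an extension of it. -/
def IsMatcherFamilyPos {V : Type} {k n : ℕ} (s : Fin k → Lit V) (m : Fin n → Lit V)
    (Sp : Fin k → Fin n → Option (PSub V)) : Prop :=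
  (∀ i j θ, Sp i j = some θ → Lit.psubst θ (s i) = some (m j)) ∧
  (∀ i j (σ : V → Trm V), Lit.subst σ (s i) = m j → ∃ θ, Sp i j = some θ ∧ PSub.le θ σ)

/-- `Sn` is the family of negative matchers `Σ⁻ᵢⱼ` (matching `sᵢ` to `¬mⱼ`). -/
def IsMatcherFamilyNeg {V : Type} {k n : ℕ} (s : Fin k → Lit V) (m : Fin n → Lit V)
    (Sn : Fin k → Fin n → Option (PSub V)) : Prop :=
  (∀ i j θ, Sn i j = some θ → Lit.psubst θ (s i) = some ((m j).neg)) ∧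
  (∀ i j (σ : V → Trm V), Lit.subst σ (s i) = (m j).neg → ∃ θ, Sn i j = some θ ∧ PSub.le θ σ)

/-- The (predicate, polarity) header of a literal. -/
def Lit.header {V : Type} (l : Lit V) : ℕ × Bool := (l.pred, l.pos)


lemma Trm.psubst_le {V : Type} (θ : PSub V) (σ : V → Trm V) (h : PSub.le θ σ) :
    ∀ t t' : Trm V, Trm.psubst θ t = some t' → Trm.subst σ t = t' := by
  intro t
  induction t with
  | var x => intro t' ht; exact h x t' ht
  | fn f => intro t' ht; simpa [Trm.psubst, Trm.subst] using ht
  | app a b iha ihb =>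
    intro t' ht
    simp only [Trm.psubst, Option.bind_eq_some_iff, Option.map_eq_some_iff] at ht
    obtain ⟨a', ha, b', hb, rfl⟩ := ht
    simp [Trm.subst, iha a' ha, ihb b' hb]

lemma Lit.psubst_le {V : Type} (θ : PSub V) (σ : V → Trm V) (h : PSub.le θ σ)
    (l l' : Lit V) (hl : Lit.psubst θ l = some l') : Lit.subst σ l = l' := by
  simp only [Lit.psubst, Option.map_eq_some_iff] at hl
  obtain ⟨t, ht, rfl⟩ := hl
  simp [Lit.subst, Trm.psubst_le θ σ h _ _ ht]

/-- In any model of the subsumption encoding `𝓔_S(S,M)` with `M` duplicate-atom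
free, `b⁺ᵢⱼ` is true iff `σ(sᵢ) = mⱼ`. -/
theorem stmt16 {V : Type} {k n : ℕ} (s : Fin k → Lit V) (m : Fin n → Lit V)
    (hM : NoDupAtomsIdx m)
    (Sp : Fin k → Fin n → Option (PSub V)) (hSp : IsMatcherFamilyPos s m Sp)
    (σ : V → Trm V) (b : Fin k → Fin n → Bool)
    (hcompat : ∀ i j, b i j = true → ∃ θ, Sp i j = some θ ∧ PSub.le θ σ)
    (hcomplete : ∀ i, ∃ j, b i j = true)
    (hamo : ∀ j, ∀ i i', b i j = true → b i' j = true → i = i') :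
    ∀ i j, b i j = true ↔ Lit.subst σ (s i) = m j := by
  have fwd : ∀ i j, b i j = true → Lit.subst σ (s i) = m j := by
    intro i j hb
    obtain ⟨θ, hθ, hle⟩ := hcompat i j hb
    exact Lit.psubst_le θ σ hle _ _ (hSp.1 i j θ hθ)
  intro i j
  refine ⟨fwd i j, fun h => ?_⟩
  obtain ⟨j', hb⟩ := hcomplete i
  have := fwd i j' hb
  have : j = j' := hM.1 j j' (h.symm.trans this)
  subst this
  exact hb
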